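/- Let S be the (E+L)×(E+L) Gram matrix of vectors v_1,…,v_{E+L} in an inner product space, and let F = det S. Writing the upper-left E×E block entries as λ_{ij} and the remaining independent entries (those x_{ij} with 1 ≤ i ≤ E < j ≤ E+L or E < i ≤ j ≤ E+L) as variables, the symmetric-matrix Laplace identity yields, for 1 ≤ i, j ≤ E: ∑_{k=1}^E (1+δ_{ik}) λ_{jk} (∂F/∂λ_{ik})_x = 2 δ_{ij} F − ∑_{q=E+1}^{E+L} x_{jq} ∂F/∂x_{iq}, where (∂F/∂λ_{ik})_x treats the x-variables as constants. (Note 1+δ_{iq} = 1 since q > E ≥ i.) -/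

import Mathlib

open MvPolynomial Finset Matrix



open MvPolynomial Finset Matrix

lemma pderiv_finset_prod {σ' ι : Type*} [DecidableEq σ'] [DecidableEq ι] (e : σ') (s : Finset ι)
    (f : ι → MvPolynomial σ' ℚ) :
    pderiv e (∏ a ∈ s, f a) = ∑ a ∈ s, pderiv e (f a) * ∏ b ∈ s.erase a, f b := by
  induction s using Finset.induction with
  | empty => simp
  | insert c s ha ih =>
    rw [Finset.prod_insert ha, pderiv_mul, ih, Finset.sum_insert ha, Finset.erase_insert ha,
      Finset.mul_sum]
    congr 1
    refine Finset.sum_congr rfl fun a has => ?_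
    rw [Finset.erase_insert_of_ne (by rintro rfl; exact ha has),
      Finset.prod_insert (fun h => ha (Finset.mem_of_mem_erase h))]
    ring

lemma pderiv_det {σ' : Type*} [DecidableEq σ'] {n : ℕ} (e : σ')
    (M : Matrix (Fin n) (Fin n) (MvPolynomial σ' ℚ)) :
    pderiv e M.det
      = ∑ r, (M.updateRow r fun d => pderiv e (M r d)).det := by
  simp only [Matrix.det_apply]
  rw [map_sum, Finset.sum_comm]
  refine Finset.sum_congr rfl fun σ _ => ?_
  have hs : ∀ x : MvPolynomial σ' ℚ, (Equiv.Perm.sign σ) • x = ((Equiv.Perm.sign σ : ℤ) • x) := by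
    intro x; rfl
  have key : ∑ r, ∏ i, (M.updateRow r fun d => pderiv e (M r d)) (σ i) i
      = ∑ a, pderiv e (M (σ a) a) * ∏ b ∈ univ.erase a, M (σ b) b := by
    rw [← Equiv.sum_comp σ fun r => ∏ i, (M.updateRow r fun d => pderiv e (M r d)) (σ i) i]
    refine Finset.sum_congr rfl fun a _ => ?_
    rw [← Finset.mul_prod_erase _ _ (Finset.mem_univ a)]
    congr 1
    · simp [Matrix.updateRow_apply]
    · refine Finset.prod_congr rfl fun b hb => ?_
      have : σ b ≠ σ a := fun h => (Finset.mem_erase.1 hb).1 (σ.injective h)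
      simp [Matrix.updateRow_apply, this]
  simp only [hs, map_zsmul, pderiv_finset_prod, ← Finset.smul_sum, key]

variable {n : ℕ}

/-- the symmetric variable matrix -/
noncomputable def SMat (n : ℕ) : Matrix (Fin n) (Fin n) (MvPolynomial (Sym2 (Fin n)) ℚ) :=
  Matrix.of fun a b => X (Sym2.mk a b)

lemma SMat_transpose : (SMat n)ᵀ = SMat n := by
  ext a b
  simp [SMat, Matrix.transpose_apply, Sym2.eq_swap]

lemma adjugate_SMat_symm (a b : Fin n) :
    (SMat n).adjugate a b = (SMat n).adjugate b a := by
  conv_lhs => rw [← SMat_transpose, ← Matrix.adjugate_transpose, Matrix.transpose_apply]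

lemma pderiv_det_SMat (a b : Fin n) :
    pderiv (Sym2.mk a b) (SMat n).det
      = (if a = b then 1 else 2) * (SMat n).adjugate a b := by
  rw [pderiv_det]
  have hrow : ∀ r d : Fin n,
      pderiv (Sym2.mk a b) (SMat n r d)
        = if (r = a ∧ d = b) ∨ (r = b ∧ d = a) then 1 else 0 := by
    intro r d
    rw [SMat, Matrix.of_apply, pderiv_X]
    by_cases h : Sym2.mk a b = Sym2.mk r d
    · rw [if_pos]
      · simp [Pi.single_apply, h]
      · rw [Sym2.eq_iff] at h; tauto
    · rw [if_neg]
      · simp [Pi.single_apply, h]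
      · rw [Sym2.eq_iff] at h; tauto
  by_cases hab : a = b
  · subst hab
    rw [Finset.sum_eq_single a]
    · rw [if_pos rfl, one_mul, Matrix.adjugate_apply]
      have : (fun d => pderiv (Sym2.mk a a) (SMat n a d)) = Pi.single a (1:MvPolynomial (Sym2 (Fin n)) ℚ) := by
        funext d
        rw [hrow]
        simp [Pi.single_apply, and_comm, eq_comm]
      rw [this]
    · intro r _ hr
      apply Matrix.det_eq_zero_of_row_eq_zero r
      intro d
      rw [Matrix.updateRow_self, hrow]
      simp [hr]
    · simp
  · have hsub : (univ : Finset (Fin n)) = insert a (insert b (univ \ {a, b})) := by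
      rw [Finset.insert_eq, Finset.insert_eq, ← Finset.union_assoc, ← Finset.insert_eq]
      rw [Finset.union_comm, Finset.sdiff_union_of_subset (Finset.subset_univ _)]
    rw [hsub, Finset.sum_insert, Finset.sum_insert]
    · have hz : ∑ r ∈ univ \ {a, b},
          ((SMat n).updateRow r fun d => pderiv (Sym2.mk a b) (SMat n r d)).det = 0 := by
        apply Finset.sum_eq_zero
        intro r hr
        simp only [Finset.mem_sdiff, Finset.mem_insert, Finset.mem_singleton] at hr
        push_neg at hr
        apply Matrix.det_eq_zero_of_row_eq_zero r
        intro d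
        rw [Matrix.updateRow_self, hrow]
        simp [hr.2.1, hr.2.2]
      have ha' : ((SMat n).updateRow a fun d => pderiv (Sym2.mk a b) (SMat n a d)).det
          = (SMat n).adjugate b a := by
        rw [Matrix.adjugate_apply]
        have : (fun d => pderiv (Sym2.mk a b) (SMat n a d)) = Pi.single b (1:MvPolynomial (Sym2 (Fin n)) ℚ) := by
          funext d
          rw [hrow]
          simp [Pi.single_apply, hab, eq_comm]
        rw [this]
      have hb' : ((SMat n).updateRow b fun d => pderiv (Sym2.mk a b) (SMat n b d)).det
          = (SMat n).adjugate a b := by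
        rw [Matrix.adjugate_apply]
        have : (fun d => pderiv (Sym2.mk a b) (SMat n b d)) = Pi.single a (1:MvPolynomial (Sym2 (Fin n)) ℚ) := by
          funext d
          rw [hrow]
          simp [Pi.single_apply, Ne.symm hab, eq_comm]
        rw [this]
      rw [hz, ha', hb', add_zero, if_neg hab, adjugate_SMat_symm b a]
      ring
    · simp [hab]
    · simp [hab]

/-- The symmetric-matrix Laplace identity for the Baikov Gram matrix: writing
`F = det S` for the symmetric `(E+L) × (E+L)` matrix of independent variables,
with external block entries `λ_{ij}` (`i, j ≤ E`) and loop-dependent entries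
`x_{iq}`, one has for `1 ≤ i, j ≤ E`:
`∑_k (1+δ_{ik}) λ_{jk} (∂F/∂λ_{ik})_x = 2 δ_{ij} F − ∑_q x_{jq} ∂F/∂x_{iq}`. -/
theorem laplace_identity_baikov_gram (E L : ℕ) (i j : Fin E) :
    ∑ k : Fin E,
        ((1 : MvPolynomial (Sym2 (Fin (E + L))) ℚ) + if i = k then 1 else 0) *
          X (Sym2.mk (Fin.castAdd L j) (Fin.castAdd L k)) *
          pderiv (Sym2.mk (Fin.castAdd L i) (Fin.castAdd L k))
            (Matrix.det (Matrix.of fun a b : Fin (E + L) =>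
              (X (Sym2.mk a b) : MvPolynomial (Sym2 (Fin (E + L))) ℚ)))
      = 2 * (if i = j then (1 : MvPolynomial (Sym2 (Fin (E + L))) ℚ) else 0) *
          Matrix.det (Matrix.of fun a b : Fin (E + L) =>
            (X (Sym2.mk a b) : MvPolynomial (Sym2 (Fin (E + L))) ℚ))
        - ∑ q : Fin L,
            X (Sym2.mk (Fin.castAdd L j) (Fin.natAdd E q)) *
              pderiv (Sym2.mk (Fin.castAdd L i) (Fin.natAdd E q))
                (Matrix.det (Matrix.of fun a b : Fin (E + L) =>
                  (X (Sym2.mk a b) : MvPolynomial (Sym2 (Fin (E + L))) ℚ))) := by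
  have hF : (Matrix.of fun a b : Fin (E + L) =>
      (X (Sym2.mk a b) : MvPolynomial (Sym2 (Fin (E + L))) ℚ)) = SMat (E + L) := rfl
  rw [hF]
  have h1 : ∀ k : Fin E,
      ((1 : MvPolynomial (Sym2 (Fin (E + L))) ℚ) + if i = k then 1 else 0) *
          X (Sym2.mk (Fin.castAdd L j) (Fin.castAdd L k)) *
          pderiv (Sym2.mk (Fin.castAdd L i) (Fin.castAdd L k)) (SMat (E + L)).det
        = 2 * (X (Sym2.mk (Fin.castAdd L j) (Fin.castAdd L k)) *
            (SMat (E + L)).adjugate (Fin.castAdd L k) (Fin.castAdd L i)) := by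
    intro k
    rw [pderiv_det_SMat, adjugate_SMat_symm]
    by_cases h : i = k
    · rw [if_pos h, if_pos (by rw [h])]; ring
    · rw [if_neg h, if_neg (fun hc => h (Fin.castAdd_inj.mp hc))]; ring
  have h2 : ∀ q : Fin L,
      X (Sym2.mk (Fin.castAdd L j) (Fin.natAdd E q)) *
          pderiv (Sym2.mk (Fin.castAdd L i) (Fin.natAdd E q)) (SMat (E + L)).det
        = 2 * (X (Sym2.mk (Fin.castAdd L j) (Fin.natAdd E q)) *
            (SMat (E + L)).adjugate (Fin.natAdd E q) (Fin.castAdd L i)) := by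
    intro q
    have hne : Fin.castAdd L i ≠ Fin.natAdd E q := by
      intro h
      have := congrArg Fin.val h
      simp only [Fin.coe_castAdd, Fin.coe_natAdd] at this
      omega
    rw [pderiv_det_SMat, if_neg hne, adjugate_SMat_symm]
    ring
  simp only [h1, h2]
  rw [eq_sub_iff_add_eq, ← Finset.mul_sum, ← Finset.mul_sum, ← mul_add,
    ← Fin.sum_univ_add (fun b : Fin (E + L) =>
        X (Sym2.mk (Fin.castAdd L j) b) * (SMat (E + L)).adjugate b (Fin.castAdd L i))]
  have hmul : ∑ b : Fin (E + L),
      X (Sym2.mk (Fin.castAdd L j) b) * (SMat (E + L)).adjugate b (Fin.castAdd L i)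
      = (SMat (E + L) * (SMat (E + L)).adjugate) (Fin.castAdd L j) (Fin.castAdd L i) := by
    rw [Matrix.mul_apply]; rfl
  rw [hmul, Matrix.mul_adjugate, Matrix.smul_apply, Matrix.one_apply, smul_eq_mul]
  by_cases h : i = j
  · rw [if_pos (by rw [h]), if_pos h]; ring
  · rw [if_neg (fun hc => h (Fin.castAdd_inj.mp hc).symm), if_neg h]; ring
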